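/- Let n be a positive integer such that lspec(n) is unmixed, and let m be the largest (odd) element of lspec(n). Then L(n) = {2^α · m : α ≥ 0, 2^(α+1) > m}. -/

import Mathlib

/-- The length spectrum of `n`: the set of lengths `l` of decompositions of `n`,
i.e. sequences `a, a+1, ..., a+(l-1)` of `l ≥ 1` consecutive positive integers summing to `n`. -/
def lspec (n : ℕ) : Set ℕ :=
  {l | 0 < l ∧ ∃ a : ℕ, 0 < a ∧ ∑ i ∈ Finset.range l, (a + i) = n}

/-- `A₀`: the even elements of `A`. -/
def evens (A : Set ℕ) : Set ℕ := {x ∈ A | Even x}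

/-- `A₁`: the odd elements of `A`. -/
def odds (A : Set ℕ) : Set ℕ := {x ∈ A | Odd x}

/-- The spectral class of `n`: positive integers with the same length spectrum as `n`. -/
def specClass (n : ℕ) : Set ℕ := {m | 0 < m ∧ lspec m = lspec n}

/-- A set is balanced if it has equally many even and odd elements. -/
def balancedSet (S : Set ℕ) : Prop := (evens S).encard = (odds S).encard

/-- A set is unmixed if it has no even elements. -/
def unmixedSet (S : Set ℕ) : Prop := evens S = ∅

/-- A set is lopsided if it is neither balanced nor unmixed. -/
def lopsidedSet (S : Set ℕ) : Prop := ¬ balancedSet S ∧ ¬ unmixedSet S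

/-- The set of ratios `m'/m` over pairs of complementary factors `m ≤ m'` of `k`;
`q(k)` is the least element of this set. -/
def qSet (k : ℕ) : Set ℚ :=
  {r | ∃ m m' : ℕ, 0 < m ∧ m ≤ m' ∧ m * m' = k ∧ r = (m' : ℚ) / (m : ℚ)}

/-- The exceptional set `E(S)`: numbers `a = b·c` with `b, c ∈ S₁`, `a > max S₀`, and
whose set of divisors of `(max S₁)·a` strictly below `a` is exactly `S₁`. -/
def excSet (S : Set ℕ) : Set ℕ :=
  {a | (∃ b ∈ odds S, ∃ c ∈ odds S, a = b * c) ∧ sSup (evens S) < a ∧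
    {d | d ∣ sSup (odds S) * a ∧ d < a} = odds S}

/-- `P(S)`: the primes strictly greater than `max S₀`. -/
def primesAbove (S : Set ℕ) : Set ℕ := {p | p.Prime ∧ sSup (evens S) < p}

/-- A balanced spectrum is non-excessive if `S₁` is exactly the set of divisors of `max S₁`. -/
def nonExcessive (S : Set ℕ) : Prop := odds S = {d | d ∣ sSup (odds S)}

/-- `γ_p`: the largest `k` with `p^k ∈ S₁`. -/
noncomputable def gammaIdx (S : Set ℕ) (p : ℕ) : ℕ := sSup {k | p ^ k ∈ odds S}

/-- `μ_p = v_p(max S₁)`. -/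
noncomputable def muIdx (S : Set ℕ) (p : ℕ) : ℕ := (sSup (odds S)).factorization p

/-- The excessive index `ε_p = γ_p − μ_p` of a prime `p` with respect to `S`. -/
noncomputable def excIdx (S : Set ℕ) (p : ℕ) : ℕ := gammaIdx S p - muIdx S p

/-- The difference set `D(S)`: `S₁` with its `|S₀|` smallest elements removed when
`|S₀| ≤ |S₁|`, and empty otherwise.  An element `x` of `S₁` survives exactly when at least
`|S₀|` elements of `S₁` lie strictly below it. -/
def diffSet (S : Set ℕ) : Set ℕ :=
  {x ∈ odds S | (evens S).encard ≤ {y ∈ odds S | y < x}.encard}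
lemma sum_helper (l a : ℕ) (hl : 0 < l) :
    2 * ∑ i ∈ Finset.range l, (a + i) = l * (2 * a + l - 1) := by
  rcases Nat.exists_eq_succ_of_ne_zero hl.ne' with ⟨k, rfl⟩
  have h1 : ∑ i ∈ Finset.range (k+1), (a + i)
      = (k+1) * a + ∑ i ∈ Finset.range (k+1), i := by
    rw [Finset.sum_add_distrib, Finset.sum_const, Finset.card_range, smul_eq_mul]
  have h2 := Finset.sum_range_id_mul_two (k+1)
  rw [Nat.add_sub_cancel] at h2
  have h3 : 2 * a + (k+1) - 1 = 2 * a + k := by omega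
  show 2 * ∑ i ∈ Finset.range (k+1), (a+i) = (k+1) * (2*a + (k+1) - 1)
  rw [h3, h1]
  calc 2 * ((k+1) * a + ∑ i ∈ Finset.range (k+1), i)
      = (k+1) * (2*a) + (∑ i ∈ Finset.range (k+1), i) * 2 := by ring
    _ = (k+1) * (2*a) + (k+1) * k := by rw [h2]
    _ = (k+1) * (2*a + k) := by ring

lemma mem_lspec_iff {n : ℕ} (hn : 0 < n) (l : ℕ) :
    l ∈ lspec n ↔ ∃ w, l * w = 2 * n ∧ l < w ∧ Odd (l + w) := by
  constructor
  · rintro ⟨hl, a, ha, hsum⟩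
    refine ⟨2 * a + l - 1, ?_, by omega, ?_⟩
    · rw [← sum_helper l a hl, hsum]
    · rw [Nat.odd_iff]; omega
  · rintro ⟨w, hw, hlw, hodd⟩
    have hl : 0 < l := by
      rcases Nat.eq_zero_or_pos l with h | h
      · subst h; simp at hw; omega
      · exact h
    rw [Nat.odd_iff] at hodd
    refine ⟨hl, (w - l + 1) / 2, by omega, ?_⟩
    have h2a : 2 * ((w - l + 1) / 2) + l - 1 = w := by omega
    have hs := sum_helper l ((w - l + 1) / 2) hl
    rw [h2a, hw] at hs
    omega

lemma lspec_eq_divisors {α m : ℕ} (hodd : Odd m) (hlt : m < 2 ^ (α + 1)) :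
    lspec (2 ^ α * m) = {d | d ∣ m} := by
  have hm : 0 < m := hodd.pos
  have hn : 0 < 2 ^ α * m := Nat.mul_pos (Nat.pow_pos (by norm_num)) hm
  have h2n : 2 * (2 ^ α * m) = 2 ^ (α + 1) * m := by ring
  ext l
  rw [mem_lspec_iff hn l]
  constructor
  · rintro ⟨w, hw, hlw, hpar⟩
    rw [h2n] at hw
    rcases Nat.even_or_odd l with hle | hlo
    · -- l even: contradiction
      exfalso
      have hl0 : 0 < l := by
        rcases Nat.eq_zero_or_pos l with h | h
        · exfalso; subst h; simp at hw; omega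
        · exact h
      have hwo : Odd w := by
        rw [Nat.odd_iff] at hpar ⊢; rw [Nat.even_iff] at hle; omega
      have hcw : Nat.Coprime (2 ^ (α + 1)) w :=
        Nat.Coprime.pow_left _ (Nat.coprime_two_left.mpr hwo)
      have hwm : w ∣ m := by
        have hdvd : w ∣ 2 ^ (α + 1) * m := ⟨l, by rw [← hw]; ring⟩
        exact Nat.Coprime.dvd_of_dvd_mul_left
          (Nat.Coprime.pow_right _ (Nat.coprime_two_right.mpr hwo)) hdvd
      have hwle : w ≤ m := Nat.le_of_dvd hm hwm
      have h2l : 2 ^ (α + 1) ∣ l :=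
        hcw.dvd_of_dvd_mul_right (hw ▸ Dvd.intro m rfl)
      have := Nat.le_of_dvd hl0 h2l
      omega
    · have : l ∣ m := by
        have hdvd : l ∣ 2 ^ (α + 1) * m := ⟨w, hw.symm⟩
        exact Nat.Coprime.dvd_of_dvd_mul_left
          (Nat.Coprime.pow_right _ (Nat.coprime_two_right.mpr hlo)) hdvd
      exact this
  · intro hd
    have hdpos : 0 < l := Nat.pos_of_dvd_of_pos hd hm
    have hlo : Odd l := hodd.of_dvd_nat hd  -- maybe wrong name
    refine ⟨2 ^ (α + 1) * (m / l), ?_, ?_, ?_⟩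
    · rw [h2n, ← Nat.mul_assoc, Nat.mul_comm l (2^(α+1)), Nat.mul_assoc,
        Nat.mul_div_cancel' hd]
    · calc l ≤ m := Nat.le_of_dvd hm hd
        _ < 2 ^ (α + 1) := hlt
        _ ≤ 2 ^ (α + 1) * (m / l) := Nat.le_mul_of_pos_right _
              (Nat.div_pos (Nat.le_of_dvd hm hd) hdpos)
    · have : Even (2 ^ (α + 1) * (m / l)) :=
        (Even.mul_right (by simp [Nat.even_pow]) _)
      exact hlo.add_even this

lemma sSup_divisors {m : ℕ} (hm : 0 < m) : sSup {d | d ∣ m} = m := by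
  apply le_antisymm
  · exact csSup_le ⟨m, dvd_refl m⟩ fun d hd => Nat.le_of_dvd hm hd
  · exact le_csSup ⟨m, fun d hd => Nat.le_of_dvd hm hd⟩ (dvd_refl m)

lemma crux {x : ℕ} (hx : 0 < x) (hun : ∀ l ∈ lspec x, ¬ Even l) :
    (x / 2 ^ x.factorization 2) < 2 ^ (x.factorization 2 + 1) ∧
      lspec x = {d | d ∣ (x / 2 ^ x.factorization 2)} := by
  set β := x.factorization 2 with hβ
  set m' := (x / 2 ^ x.factorization 2) with hm'
  have hfac : 2 ^ β * m' = x := Nat.ordProj_mul_ordCompl_eq_self x 2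
  have hodd : Odd m' := Nat.odd_iff.mpr (by
    have := Nat.not_dvd_ordCompl Nat.prime_two hx.ne'
    omega)
  have hm'pos : 0 < m' := hodd.pos
  have hlt : m' < 2 ^ (β + 1) := by
    by_contra hle
    push_neg at hle
    have hne : 2 ^ (β + 1) ≠ m' := by
      intro heq
      have : Even (2 ^ (β + 1)) := by simp [Nat.even_pow]
      rw [heq] at this
      exact (Nat.not_even_iff_odd.mpr hodd) this
    have hmem : 2 ^ (β + 1) ∈ lspec x := by
      rw [mem_lspec_iff hx]
      refine ⟨m', by rw [← hfac]; ring, lt_of_le_of_ne hle hne, ?_⟩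
      exact Even.add_odd (by simp [Nat.even_pow]) hodd
    exact hun _ hmem (by simp [Nat.even_pow])
  exact ⟨hlt, by rw [← hfac]; exact lspec_eq_divisors hodd hlt⟩

/-- If `lspec n` is unmixed with largest element `m`, then
`L(n) = {2^α · m : α ≥ 0, 2^(α+1) > m}`. -/
theorem specClass_of_unmixed (n m : ℕ) (hn : 0 < n) (h : unmixedSet (lspec n))
    (hm : m = sSup (lspec n)) :
    specClass n = {x | ∃ α : ℕ, m < 2 ^ (α + 1) ∧ x = 2 ^ α * m} := by
  have hun : ∀ l ∈ lspec n, ¬ Even l := by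
    intro l hl he
    have : l ∈ evens (lspec n) := ⟨hl, he⟩
    rw [h] at this
    exact this
  obtain ⟨hltn, hspecn⟩ := crux hn hun
  have hm0pos : 0 < (n / 2 ^ n.factorization 2) := Nat.ordCompl_pos 2 hn.ne'
  have hmm : m = (n / 2 ^ n.factorization 2) := by
    rw [hm, hspecn]
    exact sSup_divisors hm0pos
  have hmodd : Odd m := by
    rw [hmm, Nat.odd_iff]
    have := Nat.not_dvd_ordCompl Nat.prime_two hn.ne'
    omega
  have hmpos : 0 < m := hmodd.pos
  have hspecn' : lspec n = {d | d ∣ m} := by rw [hspecn, hmm]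
  ext x
  simp only [specClass, Set.mem_setOf_eq]
  constructor
  · rintro ⟨hx, hlx⟩
    have hunx : ∀ l ∈ lspec x, ¬ Even l := by rw [hlx]; exact hun
    obtain ⟨hltx, hspecx⟩ := crux hx hunx
    have heq : {d | d ∣ (x / 2 ^ x.factorization 2)} = {d | d ∣ m} := by
      rw [← hspecx, hlx, hspecn']
    have hmx : (x / 2 ^ x.factorization 2) = m := by
      have h1 : (x / 2 ^ x.factorization 2) ∣ m := by
        have : (x / 2 ^ x.factorization 2) ∈ {d | d ∣ (x / 2 ^ x.factorization 2)} := dvd_refl _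
        rwa [heq] at this
      have h2 : m ∣ (x / 2 ^ x.factorization 2) := by
        have : m ∈ {d | d ∣ m} := dvd_refl _
        rwa [← heq] at this
      exact Nat.dvd_antisymm h1 h2
    refine ⟨x.factorization 2, by rwa [hmx] at hltx, ?_⟩
    rw [← hmx]
    exact (Nat.ordProj_mul_ordCompl_eq_self x 2).symm
  · rintro ⟨α, hα, rfl⟩
    refine ⟨Nat.mul_pos (Nat.pow_pos (by norm_num)) hmpos, ?_⟩
    rw [lspec_eq_divisors hmodd hα, hspecn']
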